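/- arXiv:1504.05771 — 5 statements merged into one kernel-verified Lean document; each statement's English description precedes it below -/
import Mathlib

section
/- For any function f: {0,...,N-1} → ℝ, any s ≥ 0, any 1 ≤ m ≤ N, and any measure m_N(k) = (1+E/N)^{-k} with E > 0, one has f(N-1)^2 ≤ 2 e^{E} ( (m/N^2) D_N(f) + (1/m) ⟨f,f⟩_{m_N} ), where D_N(f) = N^2 Σ_{k=0}^{N-2} (f(k+1)-f(k))^2 m_N(k) and ⟨f,f⟩_{m_N} = Σ_{k=0}^{N-1} f(k)^2 m_N(k), provided m_N(k) ≥ e^{-E} for all 0 ≤ k ≤ N-1. -/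
open Finset

/-- boundary value estimate by Dirichlet form and L²(m_N) norm. -/
theorem stmt0 (N m : ℕ) (hN : 2 ≤ N) (hm1 : 1 ≤ m) (hmN : m ≤ N)
    (E : ℝ) (hE : 0 < E) (f : ℕ → ℝ) (mN : ℕ → ℝ)
    (hmdef : ∀ k, mN k = (1 + E / N) ^ (-(k : ℤ)))
    (hlb : ∀ k < N, Real.exp (-E) ≤ mN k) :
    f (N - 1) ^ 2 ≤
      2 * Real.exp E *
        ((m / (N : ℝ) ^ 2) *
            ((N : ℝ) ^ 2 * ∑ k ∈ range (N - 1), (f (k + 1) - f k) ^ 2 * mN k) +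
          (1 / m) * ∑ k ∈ range N, f k ^ 2 * mN k) := by
  set SW := ∑ k ∈ range (N - 1), (f (k + 1) - f k) ^ 2 * mN k with hSW
  set Q := ∑ k ∈ range N, f k ^ 2 * mN k with hQ
  set S := ∑ k ∈ range (N - 1), (f (k + 1) - f k) ^ 2 with hSdef
  have hS0 : 0 ≤ S := Finset.sum_nonneg fun i _ => sq_nonneg _
  have hmpos : (0 : ℝ) < m := by exact_mod_cast hm1.trans_lt' (by norm_num)
  have hexp : ∀ k < N, (1 : ℝ) ≤ Real.exp E * mN k := by
    intro k hk
    have := hlb k hk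
    have h1 : Real.exp E * Real.exp (-E) ≤ Real.exp E * mN k :=
      mul_le_mul_of_nonneg_left this (Real.exp_pos E).le
    rwa [← Real.exp_add, add_neg_cancel, Real.exp_zero] at h1
  -- Step A
  have stepA : ∀ j ∈ Ico (N - m) N, f (N - 1) ^ 2 ≤ 2 * f j ^ 2 + 2 * m * S := by
    intro j hj
    simp only [mem_Ico] at hj
    have hjle : j ≤ N - 1 := by omega
    have htel : f (N - 1) = f j + ∑ k ∈ Ico j (N - 1), (f (k + 1) - f k) := by
      rw [Finset.sum_Ico_eq_sub _ hjle, Finset.sum_range_sub, Finset.sum_range_sub]; ring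
    have hcs : (∑ k ∈ Ico j (N - 1), (f (k + 1) - f k)) ^ 2 ≤ (m : ℝ) * S := by
      calc (∑ k ∈ Ico j (N - 1), (f (k + 1) - f k)) ^ 2
          ≤ ((Ico j (N - 1)).card : ℝ) * ∑ k ∈ Ico j (N - 1), (f (k + 1) - f k) ^ 2 :=
            sq_sum_le_card_mul_sum_sq
        _ ≤ (m : ℝ) * S := by
            apply mul_le_mul
            · rw [Nat.card_Ico]; exact_mod_cast (by omega : N - 1 - j ≤ m)
            · apply Finset.sum_le_sum_of_subset_of_nonneg
              · intro x hx
                simp only [mem_Ico] at hx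
                exact mem_range.mpr (by omega)
              · intro i _ _; exact sq_nonneg _
            · exact Finset.sum_nonneg fun i _ => sq_nonneg _
            · exact Nat.cast_nonneg _
    rw [htel]
    nlinarith [sq_nonneg (f j - ∑ k ∈ Ico j (N - 1), (f (k + 1) - f k)), hcs]
  -- Step B: sum over j
  have hcard : (Ico (N - m) N).card = m := by rw [Nat.card_Ico]; omega
  have hB := Finset.sum_le_sum stepA
  rw [Finset.sum_const, hcard, nsmul_eq_mul] at hB
  have hBsum : ∑ j ∈ Ico (N - m) N, (2 * f j ^ 2 + 2 * (m : ℝ) * S)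
      = 2 * (∑ j ∈ Ico (N - m) N, f j ^ 2) + (m : ℝ) * (2 * m * S) := by
    rw [Finset.sum_add_distrib, Finset.sum_const, hcard, nsmul_eq_mul, ← Finset.mul_sum]
  rw [hBsum] at hB
  set A := ∑ j ∈ Ico (N - m) N, f j ^ 2 with hA
  -- Step C
  have hC1 : A ≤ Real.exp E * Q := by
    calc A ≤ ∑ j ∈ range N, f j ^ 2 := by
          apply Finset.sum_le_sum_of_subset_of_nonneg
          · intro x hx; simp only [mem_Ico] at hx; exact mem_range.mpr (by omega)
          · intro i _ _; exact sq_nonneg _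
      _ ≤ ∑ j ∈ range N, Real.exp E * (f j ^ 2 * mN j) := by
          apply Finset.sum_le_sum
          intro j hj
          have h := hexp j (mem_range.mp hj)
          nlinarith [sq_nonneg (f j)]
      _ = Real.exp E * Q := by rw [hQ, Finset.mul_sum]
  have hC2 : S ≤ Real.exp E * SW := by
    calc S ≤ ∑ k ∈ range (N - 1), Real.exp E * ((f (k + 1) - f k) ^ 2 * mN k) := by
          apply Finset.sum_le_sum
          intro k hk
          have h := hexp k (by have := mem_range.mp hk; omega)
          nlinarith [sq_nonneg (f (k + 1) - f k)]
      _ = Real.exp E * SW := by rw [hSW, Finset.mul_sum]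
  have hNpos : (0 : ℝ) < (N : ℝ) := by exact_mod_cast (by omega : 0 < N)
  have key : (m : ℝ) * f (N - 1) ^ 2
      ≤ (m : ℝ) * (2 * Real.exp E *
        ((m / (N : ℝ) ^ 2) * ((N : ℝ) ^ 2 * SW) + (1 / m) * Q)) := by
    calc (m : ℝ) * f (N - 1) ^ 2 ≤ 2 * A + (m : ℝ) * (2 * m * S) := hB
      _ ≤ 2 * (Real.exp E * Q) + (m : ℝ) * (2 * m * (Real.exp E * SW)) := by
          gcongr
      _ = (m : ℝ) * (2 * Real.exp E *
            ((m / (N : ℝ) ^ 2) * ((N : ℝ) ^ 2 * SW) + (1 / m) * Q)) := by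
          field_simp
          ring
  exact le_of_mul_le_mul_left key hmpos
end

section
/- Let Ω be the linear operator on functions f: {0,...,N-1} → ℝ defined by (Ωf)(0) = -αEN f(0) + N(f(1)-f(0))N, (Ωf)(j) = N^2(f(j+1)+f(j-1)-2f(j)) - EN(f(j)-f(j-1)) for 1 ≤ j ≤ N-2, and (Ωf)(N-1) = βEN f(N-1) - N(1+E/N)·N(f(N-1)-f(N-2)). Then Ω is self-adjoint with respect to the measure m_N(k) = (1+E/N)^{-k}, i.e., Σ_k g(k)(Ωf)(k) m_N(k) = Σ_k (Ωg)(k) f(k) m_N(k) for all f, g. -/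
open Finset

/-- The operator `Ω` of the boundary driven WASEP Cole–Hopf equation. -/
noncomputable def OmegaOp (N : ℕ) (E α β : ℝ) (f : ℕ → ℝ) : ℕ → ℝ := fun j =>
  if j = 0 then
    -α * E * N * f 0 + N * (N * (f 1 - f 0))
  else if j = N - 1 then
    β * E * N * f (N - 1) - N * (1 + E / N) * (N * (f (N - 1) - f (N - 2)))
  else
    (N : ℝ) ^ 2 * (f (j + 1) + f (j - 1) - 2 * f j) - E * (N * (f j - f (j - 1)))

/-- `Ω` is self-adjoint in `L²(m_N)` with `m_N(k) = (1+E/N)^{-k}`. -/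
theorem stmt2 (N : ℕ) (hN : 2 ≤ N) (E α β : ℝ) (hE : 0 < E)
    (hα : α ∈ Set.Ioo (0 : ℝ) 1) (hβ : β ∈ Set.Ioo (0 : ℝ) 1)
    (mN : ℕ → ℝ) (hmdef : ∀ k, mN k = (1 + E / N) ^ (-(k : ℤ))) :
    ∀ f g : ℕ → ℝ,
      ∑ k ∈ range N, g k * OmegaOp N E α β f k * mN k =
        ∑ k ∈ range N, OmegaOp N E α β g k * f k * mN k := by
  intro f g
  obtain ⟨M, rfl⟩ : ∃ M, N = M + 2 := ⟨N - 2, by omega⟩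
  have hn0 : ((M + 2 : ℕ) : ℝ) ≠ 0 := by positivity
  have hθpos : (0 : ℝ) < 1 + E / ((M + 2 : ℕ) : ℝ) := by positivity
  have hθ : (1 : ℝ) + E / ((M + 2 : ℕ) : ℝ) ≠ 0 := ne_of_gt hθpos
  -- recursion for the measure
  have hrec : ∀ j : ℕ, mN j = (1 + E / ((M + 2 : ℕ) : ℝ)) * mN (j + 1) := by
    intro j
    rw [hmdef j, hmdef (j + 1)]
    have h1 : (-(j : ℤ)) = 1 + (-((j + 1 : ℕ) : ℤ)) := by push_cast; ring
    rw [h1, zpow_add₀ hθ, zpow_one]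
  have hm0 : mN 0 = 1 := by rw [hmdef 0]; norm_num
  rw [← sub_eq_zero, ← Finset.sum_sub_distrib]
  set n : ℝ := ((M + 2 : ℕ) : ℝ) with hn
  set h : ℕ → ℝ := fun k => n ^ 2 * (g k * f (k + 1) - f k * g (k + 1)) * mN k with hh
  have key : ∀ i ∈ Finset.range M,
      (g (i+1) * OmegaOp (M+2) E α β f (i+1) * mN (i+1)
        - OmegaOp (M+2) E α β g (i+1) * f (i+1) * mN (i+1)) = h (i+1) - h i := by
    intro i hi
    have hiM : i < M := Finset.mem_range.mp hi
    have h1 : i + 1 ≠ 0 := by omega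
    have h2 : i + 1 ≠ M + 2 - 1 := by omega
    simp only [OmegaOp, h1, h2, if_false, if_neg]
    simp only [hh]
    rw [hrec i]
    have hsimp : (i + 1 : ℕ) - 1 = i := by omega
    rw [hsimp]
    have hθid : n ^ 2 * (1 + E / n) = n ^ 2 + E * n := by field_simp
    have : ((M + 2 : ℕ) : ℝ) = n := rfl
    rw [this]
    linear_combination (g i * f (i + 1) - f i * g (i + 1)) * mN (i + 1) * hθid
  rw [show M + 2 = (M + 1) + 1 from rfl, Finset.sum_range_succ, Finset.sum_range_succ',
    Finset.sum_congr rfl key, Finset.sum_range_sub h]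
  have hT0 : g 0 * OmegaOp (M+2) E α β f 0 * mN 0
      - OmegaOp (M+2) E α β g 0 * f 0 * mN 0 = h 0 := by
    simp only [OmegaOp, eq_self_iff_true, if_true, hh, hm0]
    ring
  have hTlast : g (M+1) * OmegaOp (M+2) E α β f (M+1) * mN (M+1)
      - OmegaOp (M+2) E α β g (M+1) * f (M+1) * mN (M+1) = -h M := by
    have h1 : M + 1 ≠ 0 := by omega
    have h2 : M + 1 = M + 2 - 1 := by omega
    simp only [OmegaOp]
    rw [if_neg h1, if_neg h1, if_pos h2, if_pos h2]
    simp only [hh]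
    have h3 : M + 2 - 1 = M + 1 := by omega
    have h4 : M + 2 - 2 = M := by omega
    rw [h3, h4, hrec M]
    have : ((M + 2 : ℕ) : ℝ) = n := rfl
    rw [this]
    ring
  rw [hT0, hTlast]
  ring
end

section
/- Fix n ≥ 1 and γ ≤ 0. Suppose f_0: {0,...,N-1} → ℝ is nonnegative and monotone nondecreasing (f_0(j) ≤ f_0(j+1) for 0 ≤ j < N-1), and f_t solves the linear ODE system df_t/dt = Ω_n f_t, where Ω_n is a tridiagonal operator such that g_t(j) := f_t(j) - f_t(j-1) satisfies dg_t/dt = Ω̃_n g_t + ψ_t, with Ω̃_n a tridiagonal matrix having nonnegative off-diagonal entries (upper off-diagonal N^2, lower off-diagonal N^2(1+E/N)), and ψ_t a vector with all entries nonnegative whenever f_t is nonnegative. Then f_t(j) ≤ f_t(j+1) for all t ≥ 0 and 0 ≤ j < N-1. -/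
open Matrix Set Filter Topology

/-- monotonicity preservation for the semigroup generated by `Ω_n`:
if the increments `g_t(j) = f_t(j+1) - f_t(j)` solve a linear ODE driven by a
Metzler (tridiagonal, nonnegative off-diagonal) matrix with a source that is
nonnegative whenever `f_t` is nonnegative, then monotonicity of `f_0` is
conserved. -/
theorem stmt6 (N : ℕ) (hN : 3 ≤ N) (n : ℕ) (hn : 1 ≤ n)
    (E : ℝ) (hE : 0 < E) (γ : ℝ) (hγ : γ ≤ 0)
    (f : ℝ → ℕ → ℝ)
    (hf0nonneg : ∀ j, 0 ≤ f 0 j)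
    (hf0mono : ∀ j, j + 1 ≤ N - 1 → f 0 j ≤ f 0 (j + 1))
    (hfnonneg : ∀ t : ℝ, 0 ≤ t → ∀ j, 0 ≤ f t j)
    (Ωtilde : Matrix (Fin (N - 1)) (Fin (N - 1)) ℝ)
    (hMetzler : ∀ i j, i ≠ j → 0 ≤ Ωtilde i j)
    (htridiag : ∀ i j : Fin (N - 1), ((i : ℕ) + 1 = j → Ωtilde i j = (N : ℝ) ^ 2) ∧
      ((j : ℕ) + 1 = i → Ωtilde i j = (N : ℝ) ^ 2 * (1 + E / N)))
    (ψ : ℝ → Fin (N - 1) → ℝ)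
    (hψ : ∀ t : ℝ, 0 ≤ t → (∀ j, 0 ≤ f t j) → ∀ i, 0 ≤ ψ t i)
    (hg : ∀ t : ℝ,
      HasDerivAt (fun s => (fun i : Fin (N - 1) => f s ((i : ℕ) + 1) - f s (i : ℕ)))
        (Ωtilde.mulVec (fun i : Fin (N - 1) => f t ((i : ℕ) + 1) - f t (i : ℕ)) + ψ t) t) :
    ∀ t : ℝ, 0 ≤ t → ∀ j, j + 1 ≤ N - 1 → f t j ≤ f t (j + 1) := by
  set g : ℝ → Fin (N - 1) → ℝ := fun s i => f s ((i : ℕ) + 1) - f s (i : ℕ) with hgdef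
  -- componentwise derivative
  have hgc : ∀ (i : Fin (N - 1)) (t : ℝ),
      HasDerivAt (fun s => g s i) ((Ωtilde.mulVec (g t) + ψ t) i) t := by
    intro i t
    exact hasDerivAt_pi.mp (hg t) i
  have hgcont : ∀ i : Fin (N - 1), Continuous (fun s => g s i) := by
    intro i
    exact continuous_iff_continuousAt.mpr fun t => (hgc i t).continuousAt
  -- the constant K
  set K : ℝ := 1 + ∑ i, ∑ j, |Ωtilde i j| with hKdef
  have hrow : ∀ i : Fin (N - 1), ∑ j, |Ωtilde i j| ≤ K - 1 := by
    intro i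
    have : ∑ j, |Ωtilde i j| ≤ ∑ i', ∑ j, |Ωtilde i' j| :=
      Finset.single_le_sum (f := fun i' => ∑ j, |Ωtilde i' j|)
        (fun i' _ => Finset.sum_nonneg fun j _ => abs_nonneg _) (Finset.mem_univ i)
    simp [hKdef]; linarith
  -- monotonicity at time 0
  have hg0 : ∀ i : Fin (N - 1), 0 ≤ g 0 i := by
    intro i
    have : (i : ℕ) + 1 ≤ N - 1 := i.isLt
    have := hf0mono (i : ℕ) this
    simp [hgdef]; linarith
  -- main claim with ε-slack
  have key : ∀ ε : ℝ, 0 < ε → ∀ t : ℝ, 0 ≤ t → ∀ i : Fin (N - 1),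
      0 < g t i + ε * Real.exp (K * t) := by
    intro ε hε
    by_contra hcon
    push_neg at hcon
    obtain ⟨t₁, ht₁, i₁, hi₁⟩ := hcon
    set y : ℝ → Fin (N - 1) → ℝ := fun s i => g s i + ε * Real.exp (K * s) with hydef
    set S : Set ℝ := {s | 0 ≤ s ∧ ∃ i, y s i ≤ 0} with hSdef
    have hScl : IsClosed S := by
      have : S = Ici 0 ∩ ⋃ i, {s | y s i ≤ 0} := by
        ext s; simp [hSdef, Set.mem_iUnion]
      rw [this]
      refine isClosed_Ici.inter (isClosed_iUnion_of_finite fun i => ?_)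
      exact isClosed_le (by fun_prop (disch := exact hgcont i)) continuous_const
    have hSne : S.Nonempty := ⟨t₁, ht₁, i₁, hi₁⟩
    have hSbdd : BddBelow S := ⟨0, fun s hs => hs.1⟩
    set t₀ : ℝ := sInf S with ht₀def
    have ht₀mem : t₀ ∈ S := hScl.csInf_mem hSne hSbdd
    have ht₀0 : 0 ≤ t₀ := ht₀mem.1
    have hy0 : ∀ i, 0 < y 0 i := by
      intro i
      have := hg0 i
      have : 0 < ε * Real.exp (K * 0) := by positivity
      simp only [hydef]
      nlinarith [hg0 i]
    have ht₀pos : 0 < t₀ := by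
      rcases lt_or_eq_of_le ht₀0 with h | h
      · exact h
      · exfalso
        obtain ⟨_, i, hi⟩ := ht₀mem
        rw [← h] at hi
        exact absurd hi (not_le.mpr (hy0 i))
    -- before t₀ everything is positive
    have hbefore : ∀ s, 0 ≤ s → s < t₀ → ∀ i, 0 < y s i := by
      intro s hs0 hst i
      by_contra h
      push_neg at h
      have : s ∈ S := ⟨hs0, i, h⟩
      exact absurd (csInf_le hSbdd this) (not_le.mpr hst)
    -- at t₀ everything is nonneg
    have hat : ∀ i, 0 ≤ y t₀ i := by
      intro i
      have htend : Tendsto (fun s => y s i) (𝓝[<] t₀) (𝓝 (y t₀ i)) := by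
        have hc : Continuous (fun s => y s i) := by
          fun_prop (disch := exact hgcont i)
        exact (hc.continuousAt.tendsto).mono_left nhdsWithin_le_nhds
      refine ge_of_tendsto htend ?_
      filter_upwards [Ioo_mem_nhdsLT ht₀pos] with s hs
      exact (hbefore s hs.1.le hs.2 i).le
    obtain ⟨_, i, hi⟩ := ht₀mem
    have hyi0 : y t₀ i = 0 := le_antisymm hi (hat i)
    set e : ℝ := Real.exp (K * t₀) with hedef
    have hepos : 0 < e := Real.exp_pos _
    -- the derivative of y · i at t₀
    have hKd : HasDerivAt (fun s : ℝ => K * s) K t₀ := by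
      simpa using (hasDerivAt_id t₀).const_mul K
    have hexpd : HasDerivAt (fun s => ε * Real.exp (K * s)) (ε * (e * K)) t₀ :=
      (hKd.exp).const_mul ε
    have hyd : HasDerivAt (fun s => y s i)
        ((Ωtilde.mulVec (g t₀) + ψ t₀) i + ε * (e * K)) t₀ :=
      (hgc i t₀).add hexpd
    -- the derivative is positive
    have hgval : ∀ j, g t₀ j = y t₀ j - ε * e := by intro j; simp [hydef, hedef]
    have hψpos : 0 ≤ ψ t₀ i := hψ t₀ ht₀0 (hfnonneg t₀ ht₀0) i
    have hsum1 : 0 ≤ ∑ j, Ωtilde i j * y t₀ j := by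
      refine Finset.sum_nonneg fun j _ => ?_
      rcases eq_or_ne i j with rfl | hne
      · rw [hyi0]; simp
      · exact mul_nonneg (hMetzler i j hne) (hat j)
    have hsum2 : ∑ j, Ωtilde i j * (ε * e) ≤ (K - 1) * (ε * e) := by
      rw [← Finset.sum_mul]
      refine mul_le_mul_of_nonneg_right ?_ (by positivity)
      calc ∑ j, Ωtilde i j ≤ ∑ j, |Ωtilde i j| :=
            Finset.sum_le_sum fun j _ => le_abs_self _
        _ ≤ K - 1 := hrow i
    have hmv : (Ωtilde.mulVec (g t₀)) i = ∑ j, Ωtilde i j * g t₀ j := by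
      simp [Matrix.mulVec, dotProduct]
    have hmvge : -((K - 1) * (ε * e)) ≤ (Ωtilde.mulVec (g t₀)) i := by
      rw [hmv]
      have : ∑ j, Ωtilde i j * g t₀ j
          = ∑ j, Ωtilde i j * y t₀ j - ∑ j, Ωtilde i j * (ε * e) := by
        rw [← Finset.sum_sub_distrib]
        refine Finset.sum_congr rfl fun j _ => ?_
        rw [hgval j]; ring
      rw [this]; linarith
    have hdpos : 0 < (Ωtilde.mulVec (g t₀) + ψ t₀) i + ε * (e * K) := by
      have : 0 < ε * e := by positivity
      simp only [Pi.add_apply]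
      nlinarith
    -- but the left-slope of y · i at t₀ is nonpositive: contradiction
    have hslope : Tendsto (slope (fun s => y s i) t₀) (𝓝[<] t₀)
        (𝓝 ((Ωtilde.mulVec (g t₀) + ψ t₀) i + ε * (e * K))) := by
      refine (hasDerivAt_iff_tendsto_slope.mp hyd).mono_left ?_
      exact nhdsWithin_mono t₀ fun x hx => ne_of_lt hx
    have hev : ∀ᶠ s in 𝓝[<] t₀, 0 < slope (fun s => y s i) t₀ s :=
      hslope.eventually (eventually_gt_nhds hdpos)
    have hev2 : ∀ᶠ s in 𝓝[<] t₀, slope (fun s => y s i) t₀ s < 0 := by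
      filter_upwards [Ioo_mem_nhdsLT ht₀pos] with s hs
      have hy : 0 < y s i := hbefore s hs.1.le hs.2 i
      have : s - t₀ < 0 := by linarith [hs.2]
      rw [slope_def_field]
      simp only [hyi0, sub_zero]
      exact div_neg_of_pos_of_neg hy this
    obtain ⟨s, hs1, hs2⟩ := (hev.and hev2).exists
    linarith
  -- let ε → 0
  intro t ht j hj
  have hj' : j < N - 1 := by omega
  set i : Fin (N - 1) := ⟨j, hj'⟩ with hidef
  have : 0 ≤ g t i := by
    by_contra h
    push_neg at h
    set e : ℝ := Real.exp (K * t) with hedef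
    have hepos : 0 < e := Real.exp_pos _
    have hεpos : 0 < -g t i / (2 * e) := div_pos (by linarith) (by positivity)
    have := key _ hεpos t ht i
    rw [← hedef] at this
    have : -g t i / (2 * e) * e = -g t i / 2 := by field_simp
    nlinarith [key (-g t i / (2 * e)) hεpos t ht i]
  have : 0 ≤ f t (j + 1) - f t j := this
  linarith
end

section
/- Let φ_ε: [0,1] → [δ, 1-2ε] with δ = ε/(1+ε), ε > 0, be defined by φ_ε(t) = √(δ² + t) for 0 ≤ t ≤ 1/8 and φ_ε(t) = 1 - √(4ε² + 1 - t) for 7/8 ≤ t ≤ 1, extended to an increasing C¹ function on [1/8, 7/8] with derivative bounded by 2 there and with φ_ε(t)(1-φ_ε(t)) bounded below on [1/8,7/8] by a constant independent of ε. Then ∫_0^1 1/(φ_ε(t)(1-φ_ε(t))) dt ≤ C and ∫_0^1 φ_ε'(t) log_+( φ_ε'(t)/(φ_ε(t)(1-φ_ε(t))) ) dt ≤ C for a constant C independent of ε ∈ (0, 1/10]. -/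
open Set Real MeasureTheory intervalIntegral


private lemma logpos_mono {a b : ℝ} (ha : 0 < a) (hab : a ≤ b) :
    max (Real.log a) 0 ≤ max (Real.log b) 0 :=
  max_le_max ((Real.log_le_log_iff ha (ha.trans_le hab)).2 hab) le_rfl

private lemma logpos_one_div_le {t : ℝ} (ht : 0 < t) (ht1 : t ≤ 1) :
    max (Real.log (1 / t)) 0 ≤ 4 * t ^ (-(1/4) : ℝ) := by
  have hrp : (0:ℝ) < t ^ (-(1/4):ℝ) := Real.rpow_pos_of_pos ht _
  have h1 : Real.log (1/t) = 4 * Real.log (t ^ (-(1/4):ℝ)) := by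
    rw [Real.log_rpow ht, Real.log_div one_ne_zero (ne_of_gt ht), Real.log_one]; ring
  have h2 : Real.log (t ^ (-(1/4):ℝ)) ≤ t ^ (-(1/4):ℝ) :=
    (Real.log_le_sub_one_of_pos hrp).trans (by linarith)
  exact max_le (by rw [h1]; linarith) (by positivity)

private lemma int_rpow_le {r : ℝ} (h1 : -1 < r) (h2 : r ≤ 0) :
    ∫ t in (0:ℝ)..(1/8), 2 * t ^ r ≤ 2 / (r+1) := by
  rw [intervalIntegral.integral_const_mul, integral_rpow (Or.inl h1)]
  have h0 : (0:ℝ)^(r+1) = 0 := Real.zero_rpow (by linarith)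
  have hle : (1/8:ℝ)^(r+1) ≤ 1 := Real.rpow_le_one (by norm_num) (by norm_num) (by linarith)
  have hr1 : (0:ℝ) < r + 1 := by linarith
  rw [h0, sub_zero]
  have h3 : (1/8:ℝ)^(r+1)/(r+1) ≤ 1/(r+1) := by gcongr
  calc 2 * ((1/8:ℝ)^(r+1)/(r+1)) ≤ 2 * (1/(r+1)) := by linarith
    _ = 2/(r+1) := by ring

private lemma region_est {a t : ℝ} (ha : 0 ≤ a) (ht : 0 < t) (ht8 : t ≤ 1/8) (ha14 : a ≤ 1/8) :
    1 / (Real.sqrt (a+t) * (1 - Real.sqrt (a+t))) ≤ 2 * t ^ (-(1/2):ℝ) ∧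
    1 / (2*Real.sqrt (a+t)) *
      max (Real.log ((1 / (2*Real.sqrt (a+t))) / (Real.sqrt (a+t) * (1 - Real.sqrt (a+t))))) 0
      ≤ 2 * t ^ (-(3/4):ℝ) := by
  set s := Real.sqrt (a+t) with hs
  have hat : 0 < a + t := by linarith
  have hsp : 0 < s := Real.sqrt_pos.2 hat
  have hs2 : s^2 = a + t := Real.sq_sqrt hat.le
  have hst : Real.sqrt t ≤ s := Real.sqrt_le_sqrt (by linarith)
  have htp : 0 < Real.sqrt t := Real.sqrt_pos.2 ht
  have hshalf : s ≤ 1/2 := by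
    have h1 : s ≤ Real.sqrt (1/4) := Real.sqrt_le_sqrt (by linarith)
    have h2 : Real.sqrt (1/4 : ℝ) = 1/2 := by
      rw [show (1/4:ℝ) = (1/2)^2 by norm_num, Real.sqrt_sq (by norm_num : (0:ℝ) ≤ 1/2)]
    linarith
  have hs1 : (1:ℝ)/2 ≤ 1 - s := by linarith
  have hdpos : 0 < s * (1 - s) := mul_pos hsp (by linarith)
  have hdge : Real.sqrt t * (1/2) ≤ s * (1 - s) :=
    mul_le_mul hst hs1 (by norm_num) hsp.le
  have hrpow2 : t ^ (-(1/2):ℝ) = (Real.sqrt t)⁻¹ := by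
    rw [show (-(1/2):ℝ) = -(1/2) from rfl, Real.rpow_neg ht.le, Real.sqrt_eq_rpow]
  constructor
  · rw [hrpow2]
    have h1 : 1 / (s*(1-s)) ≤ 1 / (Real.sqrt t * (1/2)) :=
      one_div_le_one_div_of_le (by positivity) hdge
    refine h1.trans (le_of_eq ?_)
    field_simp
  · have hratio : (1/(2*s)) / (s*(1-s)) ≤ 1/t := by
      have h1 : (1/(2*s)) / (s*(1-s)) ≤ (1/(2*s)) / (s*(1/2)) := by
        have h0 : s*(1/2) ≤ s*(1-s) := mul_le_mul_of_nonneg_left hs1 hsp.le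
        exact div_le_div_of_nonneg_left (by positivity) (by positivity) h0
      have h2 : (1/(2*s)) / (s*(1/2)) = 1/(a+t) := by
        rw [← hs2]; field_simp
      have h3 : (1:ℝ)/(a+t) ≤ 1/t := one_div_le_one_div_of_le ht (by linarith)
      linarith
    have hlog : max (Real.log ((1/(2*s)) / (s*(1-s)))) 0 ≤ 4 * t ^ (-(1/4):ℝ) := by
      have hrp : 0 < (1/(2*s)) / (s*(1-s)) := by positivity
      exact (logpos_mono hrp hratio).trans (logpos_one_div_le ht (by linarith))
    have hphile : 1/(2*s) ≤ (1/2) * t ^ (-(1/2):ℝ) := by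
      rw [hrpow2]
      have h1 : 1/(2*s) ≤ 1/(2*Real.sqrt t) :=
        one_div_le_one_div_of_le (by positivity) (by linarith)
      refine h1.trans (le_of_eq ?_)
      field_simp
    calc 1/(2*s) * max (Real.log ((1/(2*s)) / (s*(1-s)))) 0
        ≤ ((1/2) * t^(-(1/2):ℝ)) * (4 * t^(-(1/4):ℝ)) :=
          mul_le_mul hphile hlog (le_max_right _ _) (by positivity)
      _ = 2 * t ^ (-(3/4):ℝ) := by
          rw [show (-(3/4):ℝ) = -(1/2) + -(1/4) by norm_num, Real.rpow_add ht]; ring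


set_option maxHeartbeats 1000000 in
/-- uniform integral bounds for the interpolation function `φ_ε`
used in the hypercontractivity argument (`log₊ a = max (log a) 0`). -/
theorem stmt13 (c₀ : ℝ) (hc₀ : 0 < c₀) :
    ∃ C : ℝ, ∀ ε : ℝ, 0 < ε → ε ≤ 1 / 10 →
      ∀ φ φ' : ℝ → ℝ,
        (∀ t ∈ Icc (0 : ℝ) 1, HasDerivAt φ (φ' t) t) →
        (∀ t ∈ Icc (0 : ℝ) 1, 0 < φ' t) →
        (∀ t ∈ Icc (0 : ℝ) 1, φ t ∈ Icc (ε / (1 + ε)) (1 - 2 * ε)) →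
        (∀ t ∈ Icc (0 : ℝ) (1 / 8), φ t = Real.sqrt ((ε / (1 + ε)) ^ 2 + t)) →
        (∀ t ∈ Icc (7 / 8 : ℝ) 1, φ t = 1 - Real.sqrt (4 * ε ^ 2 + 1 - t)) →
        (∀ t ∈ Icc (1 / 8 : ℝ) (7 / 8), φ' t ≤ 2) →
        (∀ t ∈ Icc (1 / 8 : ℝ) (7 / 8), c₀ ≤ φ t * (1 - φ t)) →
        (∫ t in (0 : ℝ)..1, 1 / (φ t * (1 - φ t))) ≤ C ∧
        (∫ t in (0 : ℝ)..1, φ' t * max (Real.log (φ' t / (φ t * (1 - φ t)))) 0) ≤ C := by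
  refine ⟨1/c₀ + 2 * max (Real.log (2/c₀)) 0 + 20, ?_⟩
  intro ε hε hε10 φ φ' hD hpos hrange hleft hright hmid hc
  have hM0 : (0:ℝ) ≤ max (Real.log (2/c₀)) 0 := le_max_right _ _
  have hc₀' : (0:ℝ) < 1/c₀ := by positivity
  set δ := ε / (1 + ε) with hδdef
  have hδ : 0 < δ := div_pos hε (by linarith)
  have hδε : δ ≤ ε := div_le_self hε.le (by linarith)
  have hδ10 : δ ≤ 1/10 := hδε.trans hε10
  -- denominator bounds
  have hd : ∀ t ∈ Icc (0:ℝ) 1, δ * (2*ε) ≤ φ t * (1 - φ t) ∧ 0 < φ t * (1 - φ t) := by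
    intro t ht
    obtain ⟨h1, h2⟩ := hrange t ht
    have hφ0 : 0 < φ t := lt_of_lt_of_le hδ h1
    have hφ1 : 2*ε ≤ 1 - φ t := by linarith
    exact ⟨mul_le_mul h1 hφ1 (by linarith) hφ0.le, mul_pos hφ0 (by linarith)⟩
  have hdlb : (0:ℝ) < δ * (2*ε) := by positivity
  -- continuity and integrability of the first integrand
  have hφc : ContinuousOn φ (Icc 0 1) := fun t ht => ((hD t ht).continuousAt).continuousWithinAt
  have huIcc : uIcc (0:ℝ) 1 = Icc 0 1 := uIcc_of_le (by norm_num)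
  have hf1c : ContinuousOn (fun t => 1 / (φ t * (1 - φ t))) (Icc 0 1) := by
    apply ContinuousOn.div continuousOn_const (hφc.mul (continuousOn_const.sub hφc))
    exact fun t ht => (hd t ht).2.ne'
  have hI1 : IntervalIntegrable (fun t => 1 / (φ t * (1 - φ t))) volume 0 1 := by
    apply ContinuousOn.intervalIntegrable; rwa [huIcc]
  have hsub : ∀ a b : ℝ, 0 ≤ a → a ≤ b → b ≤ 1 → uIcc a b ⊆ uIcc (0:ℝ) 1 := by
    intro a b h0 hab h1
    rw [uIcc_of_le hab, huIcc]
    exact Icc_subset_Icc h0 h1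
  -- derivative formulas
  have hL : ∀ t ∈ Ioo (0:ℝ) (1/8), φ' t = 1/(2*Real.sqrt (δ^2+t)) := by
    intro t ht
    have hpos' : (0:ℝ) < δ^2 + t := by nlinarith [ht.1, hδ]
    have h1 : HasDerivAt (fun s : ℝ => δ^2 + s) 1 t := by
      simpa using (hasDerivAt_id t).const_add (δ^2)
    have h2 := h1.sqrt hpos'.ne'
    have heq : φ =ᶠ[nhds t] fun s => Real.sqrt (δ^2+s) := by
      filter_upwards [Ioo_mem_nhds ht.1 ht.2] with s hs
      exact hleft s ⟨hs.1.le, hs.2.le⟩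
    exact (hD t ⟨ht.1.le, by linarith [ht.2]⟩).unique (h2.congr_of_eventuallyEq heq)
  have hR : ∀ t ∈ Ioo (7/8:ℝ) 1, φ' t = 1/(2*Real.sqrt (4*ε^2+1-t)) := by
    intro t ht
    have hpos' : (0:ℝ) < 4*ε^2+1-t := by nlinarith [ht.2, hε]
    have h1 : HasDerivAt (fun s : ℝ => 4*ε^2+1-s) (-1) t := by
      simpa using (hasDerivAt_id t).const_sub (4*ε^2+1)
    have h2 := h1.sqrt hpos'.ne'
    have h3 : HasDerivAt (fun s => 1 - Real.sqrt (4*ε^2+1-s)) (1/(2*Real.sqrt (4*ε^2+1-t))) t := by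
      have h4 : HasDerivAt (fun s => 1 - Real.sqrt (4*ε^2+1-s))
          (0 - -1/(2*Real.sqrt (4*ε^2+1-t))) t := (hasDerivAt_const t (1:ℝ)).sub h2
      convert h4 using 1
      ring
    have heq : φ =ᶠ[nhds t] fun s => 1 - Real.sqrt (4*ε^2+1-s) := by
      filter_upwards [Ioo_mem_nhds ht.1 ht.2] with s hs
      exact hright s ⟨hs.1.le, hs.2.le⟩
    exact (hD t ⟨by linarith [ht.1], ht.2.le⟩).unique (h3.congr_of_eventuallyEq heq)
  -- a.e. avoidance of boundary points
  have hfin : ∀ᵐ t : ℝ, t ∉ ({0, 1/8, 7/8, 1} : Set ℝ) := by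
    rw [← measure_eq_zero_iff_ae_notMem]
    exact Set.Finite.measure_zero (Set.toFinite _) volume
  -- integrability of the second integrand
  have hI2 : IntervalIntegrable
      (fun t => φ' t * max (Real.log (φ' t / (φ t * (1 - φ t)))) 0) volume 0 1 := by
    rw [intervalIntegrable_iff_integrableOn_Ioc_of_le (by norm_num)]
    constructor
    · have hφm : AEMeasurable φ (volume.restrict (Ioc (0:ℝ) 1)) :=
        (hφc.mono Ioc_subset_Icc_self).aemeasurable measurableSet_Ioc
      have heq : (fun t => deriv φ t) =ᵐ[volume.restrict (Ioc (0:ℝ) 1)] φ' := by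
        filter_upwards [ae_restrict_mem measurableSet_Ioc] with t ht
        exact (hD t (Ioc_subset_Icc_self ht)).deriv
      have hφ'm : AEMeasurable φ' (volume.restrict (Ioc (0:ℝ) 1)) :=
        ((measurable_deriv φ).aemeasurable).congr heq
      exact (hφ'm.mul (((Real.measurable_log.comp_aemeasurable
        (hφ'm.div (hφm.mul (aemeasurable_const.sub hφm)))).max
          aemeasurable_const))).aestronglyMeasurable
    · have hfm : IsFiniteMeasure (volume.restrict (Ioc (0:ℝ) 1)) := by
        constructor
        rw [Measure.restrict_apply_univ]
        simp [Real.volume_Ioc]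
      set B : ℝ := 1/(2*δ) + 2 + 1/(4*ε) with hB
      have hB0 : 0 < B := by positivity
      apply MeasureTheory.HasFiniteIntegral.of_bounded
        (C := B * max (Real.log (B / (δ*(2*ε)))) 0)
      filter_upwards [ae_restrict_mem measurableSet_Ioc, ae_restrict_of_ae hfin] with t ht htn
      simp only [Set.mem_insert_iff, Set.mem_singleton_iff, not_or] at htn
      obtain ⟨ht0, ht18, ht78, ht1⟩ := htn
      have ht01 : t ∈ Icc (0:ℝ) 1 := ⟨ht.1.le, ht.2⟩
      have hp' : 0 < φ' t := hpos t ht01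
      obtain ⟨hdlb', hdp⟩ := hd t ht01
      have hφ'B : φ' t ≤ B := by
        rcases lt_or_ge t (1/8) with h|h
        · rw [hL t ⟨ht.1, h⟩]
          have h1 : δ ≤ Real.sqrt (δ^2+t) := by
            have := Real.sqrt_le_sqrt (show δ^2 ≤ δ^2 + t by linarith [ht.1.le])
            rwa [Real.sqrt_sq hδ.le] at this
          have h2 : 1/(2*Real.sqrt (δ^2+t)) ≤ 1/(2*δ) :=
            one_div_le_one_div_of_le (by positivity) (by linarith)
          have h3 : (0:ℝ) < 1/(4*ε) := by positivity
          rw [hB]; linarith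
        · rcases le_or_gt t (7/8) with h'|h'
          · have h2 := hmid t ⟨h, h'⟩
            have h3 : (0:ℝ) < 1/(4*ε) := by positivity
            have h4 : (0:ℝ) < 1/(2*δ) := by positivity
            rw [hB]; linarith
          · rw [hR t ⟨h', lt_of_le_of_ne ht.2 ht1⟩]
            have h1 : 2*ε ≤ Real.sqrt (4*ε^2+1-t) := by
              have := Real.sqrt_le_sqrt (show (2*ε)^2 ≤ 4*ε^2+1-t by nlinarith [ht.2])
              rwa [Real.sqrt_sq (by linarith)] at this
            have h2 : 1/(2*Real.sqrt (4*ε^2+1-t)) ≤ 1/(2*(2*ε)) :=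
              one_div_le_one_div_of_le (by positivity) (by linarith)
            have h4 : (0:ℝ) < 1/(2*δ) := by positivity
            have h5 : 1/(2*(2*ε)) = 1/(4*ε) := by ring_nf
            rw [hB]; linarith
      have hrle : φ' t / (φ t * (1-φ t)) ≤ B / (δ*(2*ε)) :=
        div_le_div₀ hB0.le hφ'B hdlb hdlb'
      have hlogle : max (Real.log (φ' t / (φ t * (1-φ t)))) 0
          ≤ max (Real.log (B / (δ*(2*ε)))) 0 :=
        logpos_mono (div_pos hp' hdp) hrle
      have hf2nn : 0 ≤ φ' t * max (Real.log (φ' t / (φ t * (1-φ t)))) 0 :=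
        mul_nonneg hp'.le (le_max_right _ _)
      rw [Real.norm_eq_abs, abs_of_nonneg hf2nn]
      exact mul_le_mul hφ'B hlogle (le_max_right _ _) hB0.le
  -- integrabilities on subintervals
  have hI1a := hI1.mono_set (hsub 0 (1/8) le_rfl (by norm_num) (by norm_num))
  have hI1b := hI1.mono_set (hsub (1/8) (7/8) (by norm_num) (by norm_num) (by norm_num))
  have hI1c := hI1.mono_set (hsub (7/8) 1 (by norm_num) (by norm_num) le_rfl)
  have hI1ab := hI1.mono_set (hsub 0 (7/8) le_rfl (by norm_num) (by norm_num))
  have hI2a := hI2.mono_set (hsub 0 (1/8) le_rfl (by norm_num) (by norm_num))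
  have hI2b := hI2.mono_set (hsub (1/8) (7/8) (by norm_num) (by norm_num) (by norm_num))
  have hI2c := hI2.mono_set (hsub (7/8) 1 (by norm_num) (by norm_num) le_rfl)
  have hI2ab := hI2.mono_set (hsub 0 (7/8) le_rfl (by norm_num) (by norm_num))
  -- comparison functions
  have hgA : IntervalIntegrable (fun t : ℝ => 2 * t ^ (-(1/2):ℝ)) volume 0 (1/8) :=
    (intervalIntegrable_rpow' (by norm_num)).const_mul 2
  have hgA' : IntervalIntegrable (fun t : ℝ => 2 * t ^ (-(3/4):ℝ)) volume 0 (1/8) :=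
    (intervalIntegrable_rpow' (by norm_num)).const_mul 2
  have hgC : IntervalIntegrable (fun t : ℝ => 2 * (1-t) ^ (-(1/2):ℝ)) volume (7/8) 1 := by
    have h := hgA.comp_sub_left 1
    rw [show (1:ℝ)-1/8 = 7/8 by norm_num, show (1:ℝ)-0 = 1 by norm_num] at h
    exact h.symm
  have hgC' : IntervalIntegrable (fun t : ℝ => 2 * (1-t) ^ (-(3/4):ℝ)) volume (7/8) 1 := by
    have h := hgA'.comp_sub_left 1
    rw [show (1:ℝ)-1/8 = 7/8 by norm_num, show (1:ℝ)-0 = 1 by norm_num] at h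
    exact h.symm
  -- integral values of comparison functions
  have hIA : ∫ t in (0:ℝ)..(1/8), 2 * t ^ (-(1/2):ℝ) ≤ 4 := by
    have h := int_rpow_le (r := -(1/2)) (by norm_num) (by norm_num)
    have : (2:ℝ) / (-(1/2)+1) = 4 := by norm_num
    linarith [h, this.le]
  have hIA' : ∫ t in (0:ℝ)..(1/8), 2 * t ^ (-(3/4):ℝ) ≤ 8 := by
    have h := int_rpow_le (r := -(3/4)) (by norm_num) (by norm_num)
    have : (2:ℝ) / (-(3/4)+1) = 8 := by norm_num
    linarith [h, this.le]
  have hIC : ∫ t in (7/8:ℝ)..1, 2 * (1-t) ^ (-(1/2):ℝ) ≤ 4 := by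
    have h := intervalIntegral.integral_comp_sub_left (a := (7/8:ℝ)) (b := 1)
      (fun s : ℝ => 2 * s ^ (-(1/2):ℝ)) 1
    rw [show (1:ℝ)-1 = 0 by norm_num, show (1:ℝ)-7/8 = 1/8 by norm_num] at h
    rw [h]; exact hIA
  have hIC' : ∫ t in (7/8:ℝ)..1, 2 * (1-t) ^ (-(3/4):ℝ) ≤ 8 := by
    have h := intervalIntegral.integral_comp_sub_left (a := (7/8:ℝ)) (b := 1)
      (fun s : ℝ => 2 * s ^ (-(3/4):ℝ)) 1
    rw [show (1:ℝ)-1 = 0 by norm_num, show (1:ℝ)-7/8 = 1/8 by norm_num] at h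
    rw [h]; exact hIA'
  -- piece bounds for the first integral
  have P1a : ∫ t in (0:ℝ)..(1/8), 1 / (φ t * (1 - φ t)) ≤ 4 := by
    refine le_trans (intervalIntegral.integral_mono_ae_restrict (by norm_num) hI1a hgA ?_) hIA
    filter_upwards [ae_restrict_mem measurableSet_Icc, ae_restrict_of_ae hfin] with t ht htn
    simp only [Set.mem_insert_iff, Set.mem_singleton_iff, not_or] at htn
    have ht0 : 0 < t := lt_of_le_of_ne ht.1 (Ne.symm htn.1)
    rw [hleft t ⟨ht.1, ht.2⟩]
    exact (region_est (a := δ^2) (by positivity) ht0 ht.2 (by nlinarith [hδ10, hδ])).1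
  have P1b : ∫ t in (1/8:ℝ)..(7/8), 1 / (φ t * (1 - φ t)) ≤ (3/4) * (1/c₀) := by
    have hIBc : ∫ _t in (1/8:ℝ)..(7/8), (1/c₀ : ℝ) = (3/4) * (1/c₀) := by
      rw [intervalIntegral.integral_const, smul_eq_mul]; norm_num
    rw [← hIBc]
    apply intervalIntegral.integral_mono_on (by norm_num) hI1b intervalIntegrable_const
    intro t ht
    exact one_div_le_one_div_of_le hc₀ (hc t ht)
  have P1c : ∫ t in (7/8:ℝ)..1, 1 / (φ t * (1 - φ t)) ≤ 4 := by
    refine le_trans (intervalIntegral.integral_mono_ae_restrict (by norm_num) hI1c hgC ?_) hIC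
    filter_upwards [ae_restrict_mem measurableSet_Icc, ae_restrict_of_ae hfin] with t ht htn
    simp only [Set.mem_insert_iff, Set.mem_singleton_iff, not_or] at htn
    have ht1 : t < 1 := lt_of_le_of_ne ht.2 htn.2.2.2
    have hst : 0 < 1 - t := by linarith
    have e1 : φ t * (1 - φ t)
        = Real.sqrt (4*ε^2 + (1-t)) * (1 - Real.sqrt (4*ε^2 + (1-t))) := by
      rw [hright t ⟨ht.1, ht.2⟩, show 4*ε^2+1-t = 4*ε^2+(1-t) by ring]; ring
    rw [e1]
    exact (region_est (a := 4*ε^2) (by positivity) hst (by linarith [ht.1])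
      (by nlinarith [hε10, hε])).1
  -- piece bounds for the second integral
  have P2a : ∫ t in (0:ℝ)..(1/8), φ' t * max (Real.log (φ' t / (φ t * (1 - φ t)))) 0 ≤ 8 := by
    refine le_trans (intervalIntegral.integral_mono_ae_restrict (by norm_num) hI2a hgA' ?_) hIA'
    filter_upwards [ae_restrict_mem measurableSet_Icc, ae_restrict_of_ae hfin] with t ht htn
    simp only [Set.mem_insert_iff, Set.mem_singleton_iff, not_or] at htn
    have ht0 : 0 < t := lt_of_le_of_ne ht.1 (Ne.symm htn.1)
    have ht8 : t < 1/8 := lt_of_le_of_ne ht.2 htn.2.1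
    rw [hleft t ⟨ht.1, ht.2⟩, hL t ⟨ht0, ht8⟩]
    exact (region_est (a := δ^2) (by positivity) ht0 ht.2 (by nlinarith [hδ10, hδ])).2
  have P2b : ∫ t in (1/8:ℝ)..(7/8), φ' t * max (Real.log (φ' t / (φ t * (1 - φ t)))) 0
      ≤ (3/4) * (2 * max (Real.log (2/c₀)) 0) := by
    have hIB2 : ∫ _t in (1/8:ℝ)..(7/8), (2 * max (Real.log (2/c₀)) 0)
        = (3/4) * (2 * max (Real.log (2/c₀)) 0) := by
      rw [intervalIntegral.integral_const, smul_eq_mul]; norm_num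
    rw [← hIB2]
    apply intervalIntegral.integral_mono_on (by norm_num) hI2b intervalIntegrable_const
    intro t ht
    have ht01 : t ∈ Icc (0:ℝ) 1 := ⟨by linarith [ht.1], by linarith [ht.2]⟩
    have hp' := hpos t ht01
    obtain ⟨_, hdp⟩ := hd t ht01
    have h2 := hmid t ht
    have hr : φ' t / (φ t * (1-φ t)) ≤ 2/c₀ := div_le_div₀ (by norm_num) h2 hc₀ (hc t ht)
    exact mul_le_mul h2 (logpos_mono (div_pos hp' hdp) hr) (le_max_right _ _) (by norm_num)
  have P2c : ∫ t in (7/8:ℝ)..1, φ' t * max (Real.log (φ' t / (φ t * (1 - φ t)))) 0 ≤ 8 := by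
    refine le_trans (intervalIntegral.integral_mono_ae_restrict (by norm_num) hI2c hgC' ?_) hIC'
    filter_upwards [ae_restrict_mem measurableSet_Icc, ae_restrict_of_ae hfin] with t ht htn
    simp only [Set.mem_insert_iff, Set.mem_singleton_iff, not_or] at htn
    have ht78 : 7/8 < t := lt_of_le_of_ne ht.1 (Ne.symm htn.2.2.1)
    have ht1 : t < 1 := lt_of_le_of_ne ht.2 htn.2.2.2
    have hst : 0 < 1 - t := by linarith
    have e1 : φ t * (1 - φ t)
        = Real.sqrt (4*ε^2 + (1-t)) * (1 - Real.sqrt (4*ε^2 + (1-t))) := by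
      rw [hright t ⟨ht.1, ht.2⟩, show 4*ε^2+1-t = 4*ε^2+(1-t) by ring]; ring
    rw [hR t ⟨ht78, ht1⟩, e1, show 4*ε^2+1-t = 4*ε^2+(1-t) by ring]
    exact (region_est (a := 4*ε^2) (by positivity) hst (by linarith [ht.1])
      (by nlinarith [hε10, hε])).2
  -- assemble
  have hsplit1a := intervalIntegral.integral_add_adjacent_intervals hI1a hI1b
  have hsplit1b := intervalIntegral.integral_add_adjacent_intervals hI1ab hI1c
  have hsplit2a := intervalIntegral.integral_add_adjacent_intervals hI2a hI2b
  have hsplit2b := intervalIntegral.integral_add_adjacent_intervals hI2ab hI2c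
  constructor
  · rw [← hsplit1b, ← hsplit1a]
    nlinarith [P1a, P1b, P1c, hc₀', hM0]
  · rw [← hsplit2b, ← hsplit2a]
    nlinarith [P2a, P2b, P2c, hc₀', hM0]
end

section
/- For functions f, g: {0,...,N-1} → ℝ and 1 ≤ ℓ ≤ N/2, the averaging error satisfies (1/N) Σ_{j=ℓ}^{N-1-ℓ} (1/(2ℓ+1)) Σ_{k=-ℓ}^{ℓ} (f(j+k)² - f(j)²) g(j) ≤ (4ℓ ||f||_∞ ||g||_∞ / N) Σ_{j=0}^{N-2} |f(j+1) - f(j)|. -/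
open Finset

/-- block-averaging estimate: replacing `f(j)²` by its average
over a window of radius `ℓ` produces an error controlled by the total variation
of `f` (here `k` ranges over `{-ℓ,…,ℓ}` via `k - ℓ` with `k ∈ {0,…,2ℓ}`). -/
theorem stmt18 (N ℓ : ℕ) (hℓ1 : 1 ≤ ℓ) (hℓN : 2 * ℓ ≤ N)
    (f g : ℕ → ℝ) (Mf Mg : ℝ)
    (hMf : ∀ j < N, |f j| ≤ Mf) (hMg : ∀ j < N, |g j| ≤ Mg) :
    (1 / (N : ℝ)) * ∑ j ∈ Icc ℓ (N - 1 - ℓ),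
        (1 / (2 * (ℓ : ℝ) + 1)) * ∑ k ∈ range (2 * ℓ + 1),
          (f (j + k - ℓ) ^ 2 - f j ^ 2) * g j ≤
      (4 * (ℓ : ℝ) * Mf * Mg / N) * ∑ j ∈ range (N - 1), |f (j + 1) - f j| := by
  have hN2 : 2 ≤ N := by omega
  have hMf0 : 0 ≤ Mf := (abs_nonneg _).trans (hMf 0 (by omega))
  have hMg0 : 0 ≤ Mg := (abs_nonneg _).trans (hMg 0 (by omega))
  set S : ℝ := ∑ j ∈ range (N - 1), |f (j + 1) - f j| with hSdef
  have hS0 : 0 ≤ S := Finset.sum_nonneg fun _ _ => abs_nonneg _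
  set T : ℕ → ℝ := fun j => ∑ i ∈ Ico (j - ℓ) (j + ℓ), |f (i + 1) - f i| with hTdef
  have hT0 : ∀ j, 0 ≤ T j := fun j => Finset.sum_nonneg fun _ _ => abs_nonneg _
  -- pointwise square-difference bound
  have key : ∀ j ∈ Icc ℓ (N - 1 - ℓ), ∀ k ∈ range (2 * ℓ + 1),
      |f (j + k - ℓ) ^ 2 - f j ^ 2| ≤ 2 * Mf * T j := by
    intro j hj k hk
    simp only [mem_Icc] at hj
    simp only [mem_range] at hk
    have hjN : j + ℓ ≤ N - 1 := by omega
    have step : ∀ a b : ℕ, j - ℓ ≤ a → a ≤ b → b ≤ j + ℓ →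
        |f b ^ 2 - f a ^ 2| ≤ 2 * Mf * T j := by
      intro a b ha hab hb
      have tel : ∑ i ∈ Ico a b, (f (i + 1) ^ 2 - f i ^ 2) = f b ^ 2 - f a ^ 2 := by
        rw [Finset.sum_Ico_eq_sub _ hab, Finset.sum_range_sub (fun i => f i ^ 2),
          Finset.sum_range_sub (fun i => f i ^ 2)]
        ring
      rw [← tel]
      calc |∑ i ∈ Ico a b, (f (i + 1) ^ 2 - f i ^ 2)|
          ≤ ∑ i ∈ Ico a b, |f (i + 1) ^ 2 - f i ^ 2| := Finset.abs_sum_le_sum_abs _ _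
        _ ≤ ∑ i ∈ Ico (j - ℓ) (j + ℓ), |f (i + 1) ^ 2 - f i ^ 2| := by
            apply Finset.sum_le_sum_of_subset_of_nonneg (Finset.Ico_subset_Ico ha hb)
            intros; exact abs_nonneg _
        _ ≤ ∑ i ∈ Ico (j - ℓ) (j + ℓ), 2 * Mf * |f (i + 1) - f i| := by
            apply Finset.sum_le_sum
            intro i hi
            simp only [mem_Ico] at hi
            have hi1 : i + 1 < N := by omega
            have hiN : i < N := by omega
            have heq : f (i + 1) ^ 2 - f i ^ 2 = (f (i + 1) + f i) * (f (i + 1) - f i) := by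
              ring
            rw [heq, abs_mul]
            have h1 : |f (i + 1) + f i| ≤ 2 * Mf := by
              calc |f (i + 1) + f i| ≤ |f (i + 1)| + |f i| := abs_add_le _ _
                _ ≤ Mf + Mf := add_le_add (hMf _ hi1) (hMf _ hiN)
                _ = 2 * Mf := by ring
            exact mul_le_mul_of_nonneg_right h1 (abs_nonneg _)
        _ = 2 * Mf * T j := by rw [hTdef, Finset.mul_sum]
    rcases le_or_gt k ℓ with h | h
    · have := step (j + k - ℓ) j (by omega) (by omega) (by omega)
      calc |f (j + k - ℓ) ^ 2 - f j ^ 2| = |f j ^ 2 - f (j + k - ℓ) ^ 2| := abs_sub_comm _ _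
        _ ≤ 2 * Mf * T j := this
    · exact step j (j + k - ℓ) (by omega) (by omega) (by omega)
  have claim1 : ∀ j ∈ Icc ℓ (N - 1 - ℓ),
      (1 / (2 * (ℓ : ℝ) + 1)) * ∑ k ∈ range (2 * ℓ + 1),
        (f (j + k - ℓ) ^ 2 - f j ^ 2) * g j ≤ 2 * Mf * Mg * T j := by
    intro j hj
    have hjN : j < N := by
      have := hj; simp only [mem_Icc] at this; omega
    have hsum : ∑ k ∈ range (2 * ℓ + 1), (f (j + k - ℓ) ^ 2 - f j ^ 2) * g j
        ≤ (2 * (ℓ : ℝ) + 1) * (2 * Mf * Mg * T j) := by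
      calc ∑ k ∈ range (2 * ℓ + 1), (f (j + k - ℓ) ^ 2 - f j ^ 2) * g j
          ≤ ∑ _k ∈ range (2 * ℓ + 1), 2 * Mf * Mg * T j := by
            apply Finset.sum_le_sum
            intro k hk
            calc (f (j + k - ℓ) ^ 2 - f j ^ 2) * g j
                ≤ |(f (j + k - ℓ) ^ 2 - f j ^ 2) * g j| := le_abs_self _
              _ = |f (j + k - ℓ) ^ 2 - f j ^ 2| * |g j| := abs_mul _ _
              _ ≤ (2 * Mf * T j) * Mg := by
                  apply mul_le_mul (key j hj k hk) (hMg j hjN) (abs_nonneg _)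
                  have := hT0 j; positivity
              _ = 2 * Mf * Mg * T j := by ring
        _ = (2 * (ℓ : ℝ) + 1) * (2 * Mf * Mg * T j) := by
            rw [Finset.sum_const, card_range, nsmul_eq_mul]
            push_cast; ring
    have hpos : (0 : ℝ) < 2 * (ℓ : ℝ) + 1 := by positivity
    have := mul_le_mul_of_nonneg_left hsum (by positivity : (0:ℝ) ≤ 1 / (2 * (ℓ:ℝ) + 1))
    refine this.trans_eq ?_
    field_simp
  have claim2 : ∑ j ∈ Icc ℓ (N - 1 - ℓ), T j ≤ 2 * (ℓ : ℝ) * S := by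
    have hexp : ∀ j ∈ Icc ℓ (N - 1 - ℓ), T j
        = ∑ i ∈ range (N - 1),
            if i ∈ Ico (j - ℓ) (j + ℓ) then |f (i + 1) - f i| else 0 := by
      intro j hj
      simp only [mem_Icc] at hj
      have hsub : Ico (j - ℓ) (j + ℓ) ⊆ range (N - 1) := by
        intro i hi; simp only [mem_Ico, mem_range] at *; omega
      rw [Finset.sum_ite_mem, Finset.inter_eq_right.mpr hsub]
    calc ∑ j ∈ Icc ℓ (N - 1 - ℓ), T j
        = ∑ j ∈ Icc ℓ (N - 1 - ℓ), ∑ i ∈ range (N - 1),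
            if i ∈ Ico (j - ℓ) (j + ℓ) then |f (i + 1) - f i| else 0 :=
          Finset.sum_congr rfl hexp
      _ = ∑ i ∈ range (N - 1), ∑ j ∈ Icc ℓ (N - 1 - ℓ),
            if i ∈ Ico (j - ℓ) (j + ℓ) then |f (i + 1) - f i| else 0 := Finset.sum_comm
      _ ≤ ∑ i ∈ range (N - 1), 2 * (ℓ : ℝ) * |f (i + 1) - f i| := by
          apply Finset.sum_le_sum
          intro i _
          rw [Finset.sum_ite, Finset.sum_const_zero, add_zero, Finset.sum_const,
            nsmul_eq_mul]
          have hcard : ((Icc ℓ (N - 1 - ℓ)).filter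
              (fun j => i ∈ Ico (j - ℓ) (j + ℓ))).card ≤ 2 * ℓ := by
            have hsub : (Icc ℓ (N - 1 - ℓ)).filter (fun j => i ∈ Ico (j - ℓ) (j + ℓ))
                ⊆ Icc (i + 1 - ℓ) (i + ℓ) := by
              intro j hj
              simp only [mem_filter, mem_Icc, mem_Ico] at hj ⊢
              omega
            calc _ ≤ (Icc (i + 1 - ℓ) (i + ℓ)).card := Finset.card_le_card hsub
              _ ≤ 2 * ℓ := by rw [Nat.card_Icc]; omega
          have : (((Icc ℓ (N - 1 - ℓ)).filter
              (fun j => i ∈ Ico (j - ℓ) (j + ℓ))).card : ℝ) ≤ 2 * (ℓ : ℝ) := by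
            exact_mod_cast hcard
          exact mul_le_mul_of_nonneg_right this (abs_nonneg _)
      _ = 2 * (ℓ : ℝ) * S := by rw [← Finset.mul_sum]
  have hNpos : (0 : ℝ) < N := by exact_mod_cast (by omega : 0 < N)
  calc (1 / (N : ℝ)) * ∑ j ∈ Icc ℓ (N - 1 - ℓ),
        (1 / (2 * (ℓ : ℝ) + 1)) * ∑ k ∈ range (2 * ℓ + 1),
          (f (j + k - ℓ) ^ 2 - f j ^ 2) * g j
      ≤ (1 / (N : ℝ)) * ∑ j ∈ Icc ℓ (N - 1 - ℓ), 2 * Mf * Mg * T j :=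
        mul_le_mul_of_nonneg_left (Finset.sum_le_sum claim1) (by positivity)
    _ = (1 / (N : ℝ)) * (2 * Mf * Mg * ∑ j ∈ Icc ℓ (N - 1 - ℓ), T j) := by
        congr 1
        rw [Finset.mul_sum]
    _ ≤ (1 / (N : ℝ)) * (2 * Mf * Mg * (2 * (ℓ : ℝ) * S)) := by
        apply mul_le_mul_of_nonneg_left _ (by positivity)
        exact mul_le_mul_of_nonneg_left claim2 (by positivity)
    _ = (4 * (ℓ : ℝ) * Mf * Mg / N) * S := by
        field_simp; ring
end
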